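/- Let φ̂(ω) = (1/√2) e^{−πω²} (Gaussian) and μ > 0. Then for every ω ∈ ℝ, (1/2) e^{−2πμ²} ≤ Σ_{p∈ℤ} |Φ_p(ω)|² ≤ ((1/μ + 1) ‖φ̂‖_W)², where Φ_p(ω) = Σ_{η∈μI_p} φ̂(ω − η) and ‖·‖_W is the Wiener amalgam norm. In particular the Gaussian satisfies the two-sided bound required for the general α-DOST frame theorem. -/

import Mathlib

open MeasureTheory Complex Real FourierTransform

noncomputable def iS (α : ℝ) : ℕ → ℕ × ℕ
  | 0 => (0, 1)
  | p + 1 => ((iS α p).2, (iS α p).2 + ⌊((iS α p).2 : ℝ) ^ α⌋₊)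

/-- `i_p`, the left endpoint of the `p`-th interval. -/
noncomputable def ip (α : ℝ) (p : ℕ) : ℕ := (iS α p).1
/-- `s_p`, the right endpoint of the `p`-th interval. -/
noncomputable def sp (α : ℝ) (p : ℕ) : ℕ := (iS α p).2
/-- `β(p) = s_p - i_p`, the width of the `p`-th interval. -/
noncomputable def βp (α : ℝ) (p : ℕ) : ℕ := sp α p - ip α p

/-- The `ℤ`-indexed intervals of the α-partition: for `p < 0`, `I_p = -I_{-p}`. -/
noncomputable def IpZ (α : ℝ) (p : ℤ) : Finset ℤ :=
  if 0 ≤ p then Finset.Ico (ip α p.toNat : ℤ) (sp α p.toNat : ℤ)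
  else Finset.image (fun n => -n) (Finset.Ico (ip α (-p).toNat : ℤ) (sp α (-p).toNat : ℤ))

/-- Width of the `ℤ`-indexed interval `I_p`. -/
noncomputable def βZ (α : ℝ) (p : ℤ) : ℕ := βp α p.natAbs

/-- The scaled interval `μ I_p` as a subset of `ℝ`. -/
noncomputable def muIpZ (α μ : ℝ) (p : ℤ) : Set ℝ :=
  ↑(Finset.image (fun η : ℤ => μ * (η : ℝ)) (IpZ α p))

/-- `Φ_p(ω) = Σ_{η ∈ μ I_p} g(ω - η)`, where `g` plays the role of `φ̂`. -/
noncomputable def Φ (α μ : ℝ) (g : ℝ → ℂ) (p : ℤ) (ω : ℝ) : ℂ :=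
  ∑ η ∈ IpZ α p, g (ω - μ * (η : ℝ))

/-- The Gaussian window in the frequency domain: `φ̂(ω) = (1/√2) e^{-πω²}`. -/
noncomputable def gaussHat (ω : ℝ) : ℝ := (1 / Real.sqrt 2) * Real.exp (-π * ω ^ 2)

/-- Real-valued `Φ_p` built from a real window. -/
noncomputable def ΦR (α μ : ℝ) (g : ℝ → ℝ) (p : ℤ) (ω : ℝ) : ℝ :=
  ∑ η ∈ IpZ α p, g (ω - μ * (η : ℝ))

/-- The Wiener amalgam norm of a real function. -/
noncomputable def wienerNorm (g : ℝ → ℝ) : ℝ :=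
  ∑' n : ℤ, ⨆ x ∈ Set.Icc (n : ℝ) ((n : ℝ) + 1), |g x|


lemma ip_zero (α : ℝ) : ip α 0 = 0 := rfl
lemma sp_zero (α : ℝ) : sp α 0 = 1 := rfl
lemma ip_succ (α : ℝ) (p : ℕ) : ip α (p+1) = sp α p := rfl
lemma sp_succ (α : ℝ) (p : ℕ) : sp α (p+1) = sp α p + ⌊(sp α p : ℝ) ^ α⌋₊ := rfl

lemma one_le_sp (α : ℝ) (p : ℕ) : 1 ≤ sp α p := by
  induction p with
  | zero => simp [sp_zero]
  | succ n ih => rw [sp_succ]; omega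

lemma sp_lt_sp_succ {α : ℝ} (hα : 0 ≤ α) (p : ℕ) : sp α p < sp α (p+1) := by
  rw [sp_succ]
  have h1 : (1:ℝ) ≤ (sp α p : ℝ) ^ α :=
    Real.one_le_rpow (by exact_mod_cast one_le_sp α p) hα
  have : 1 ≤ ⌊(sp α p : ℝ) ^ α⌋₊ := Nat.le_floor (by exact_mod_cast h1)
  omega

lemma sp_strictMono {α : ℝ} (hα : 0 ≤ α) : StrictMono (sp α) :=
  strictMono_nat_of_lt_succ (sp_lt_sp_succ hα)

lemma ip_lt_sp {α : ℝ} (hα : 0 ≤ α) (p : ℕ) : ip α p < sp α p := by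
  cases p with
  | zero => simp [ip_zero, sp_zero]
  | succ n => rw [ip_succ]; exact sp_lt_sp_succ hα n

lemma one_le_ip {α : ℝ} {q : ℕ} (hq : 1 ≤ q) : 1 ≤ ip α q := by
  obtain ⟨q', rfl⟩ : ∃ q', q = q' + 1 := ⟨q - 1, by omega⟩
  rw [ip_succ]; exact one_le_sp α q'

lemma sp_le_ip {α : ℝ} (hα : 0 ≤ α) {p q : ℕ} (h : p < q) : sp α p ≤ ip α q := by
  obtain ⟨q', rfl⟩ : ∃ q', q = q' + 1 := ⟨q - 1, by omega⟩
  rw [ip_succ]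
  exact (sp_strictMono hα).monotone (by omega)

lemma exists_nat_interval {α : ℝ} (hα : 0 ≤ α) (j : ℕ) :
    ∃ p, ip α p ≤ j ∧ j < sp α p := by
  induction j with
  | zero => exact ⟨0, by simp [ip_zero, sp_zero]⟩
  | succ n ih =>
    obtain ⟨p, h1, h2⟩ := ih
    rcases Nat.lt_or_ge (n+1) (sp α p) with h | h
    · exact ⟨p, by omega, h⟩
    · have hn1 : n + 1 = sp α p := by omega
      exact ⟨p+1, by rw [ip_succ]; omega, by rw [hn1]; exact sp_lt_sp_succ hα p⟩

lemma exists_mem_IpZ {α : ℝ} (hα : 0 ≤ α) (j : ℤ) : ∃ p, j ∈ IpZ α p := by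
  rcases le_or_gt 0 j with hj | hj
  · obtain ⟨p, h1, h2⟩ := exists_nat_interval hα j.toNat
    refine ⟨(p:ℤ), ?_⟩
    rw [IpZ, if_pos (by positivity), Int.toNat_natCast, Finset.mem_Ico]
    omega
  · obtain ⟨q, h1, h2⟩ := exists_nat_interval hα (-j).toNat
    refine ⟨-(q:ℤ), ?_⟩
    have hq : 1 ≤ q := by
      by_contra h
      have : q = 0 := by omega
      subst this; rw [sp_zero] at h2; omega
    rw [IpZ, if_neg (by omega), Finset.mem_image]
    refine ⟨-j, ?_, by omega⟩
    rw [Finset.mem_Ico]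
    have : (-(-(q:ℤ))).toNat = q := by omega
    rw [this]; omega

lemma mem_IpZ_sign {α : ℝ} {p x : ℤ} (hx : x ∈ IpZ α p) :
    (0 ≤ p → (ip α p.toNat : ℤ) ≤ x ∧ x < sp α p.toNat) ∧
    (p < 0 → (ip α (-p).toNat : ℤ) ≤ -x ∧ -x < sp α (-p).toNat) := by
  constructor
  · intro hp; rw [IpZ, if_pos hp, Finset.mem_Ico] at hx; exact hx
  · intro hp
    rw [IpZ, if_neg (by omega), Finset.mem_image] at hx
    obtain ⟨n, hn, rfl⟩ := hx
    rw [Finset.mem_Ico] at hn; simpa using hn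

lemma IpZ_disjoint {α : ℝ} (hα : 0 ≤ α) {p q : ℤ} (h : p ≠ q) :
    Disjoint (IpZ α p) (IpZ α q) := by
  rw [Finset.disjoint_left]
  intro x hxp hxq
  have key : ∀ a b : ℕ, a < b → ∀ y : ℤ, (ip α a : ℤ) ≤ y → y < sp α a →
      (ip α b : ℤ) ≤ y → y < sp α b → False := by
    intro a b hab y h1 h2 h3 h4
    have := sp_le_ip hα hab
    omega
  have neg_pos : ∀ r : ℤ, r < 0 → ∀ y : ℤ, (ip α (-r).toNat : ℤ) ≤ -y → 1 ≤ -y := by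
    intro r hr y h1
    have : 1 ≤ ip α (-r).toNat := one_le_ip (by omega)
    omega
  rcases le_or_gt 0 p with hp | hp <;> rcases le_or_gt 0 q with hq | hq
  · obtain ⟨h1, h2⟩ := (mem_IpZ_sign hxp).1 hp
    obtain ⟨h3, h4⟩ := (mem_IpZ_sign hxq).1 hq
    have hne : p.toNat ≠ q.toNat := by omega
    rcases hne.lt_or_gt with hlt | hlt
    · exact key _ _ hlt x h1 h2 h3 h4
    · exact key _ _ hlt x h3 h4 h1 h2
  · obtain ⟨h1, h2⟩ := (mem_IpZ_sign hxp).1 hp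
    obtain ⟨h3, h4⟩ := (mem_IpZ_sign hxq).2 hq
    have := neg_pos q hq x h3
    have : (0:ℤ) ≤ ip α p.toNat := by positivity
    omega
  · obtain ⟨h1, h2⟩ := (mem_IpZ_sign hxp).2 hp
    obtain ⟨h3, h4⟩ := (mem_IpZ_sign hxq).1 hq
    have := neg_pos p hp x h1
    have : (0:ℤ) ≤ ip α q.toNat := by positivity
    omega
  · obtain ⟨h1, h2⟩ := (mem_IpZ_sign hxp).2 hp
    obtain ⟨h3, h4⟩ := (mem_IpZ_sign hxq).2 hq
    have hne : (-p).toNat ≠ (-q).toNat := by omega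
    rcases hne.lt_or_gt with hlt | hlt
    · exact key _ _ hlt (-x) h1 h2 h3 h4
    · exact key _ _ hlt (-x) h3 h4 h1 h2

noncomputable def wS (n : ℤ) : ℝ := ⨆ x ∈ Set.Icc (n : ℝ) ((n : ℝ) + 1), |gaussHat x|

lemma gaussHat_nonneg (x : ℝ) : 0 ≤ gaussHat x := by
  unfold gaussHat; positivity

lemma gaussHat_le_half (x : ℝ) : gaussHat x ≤ 1 / Real.sqrt 2 := by
  unfold gaussHat
  have h1 : Real.exp (-π * x ^ 2) ≤ 1 := by
    rw [Real.exp_le_one_iff]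
    nlinarith [Real.pi_pos, sq_nonneg x]
  have h2 : (0:ℝ) ≤ 1 / Real.sqrt 2 := by positivity
  nlinarith

lemma gaussHat_anti {a x : ℝ} (h : a ^ 2 ≤ x ^ 2) : gaussHat x ≤ gaussHat a := by
  unfold gaussHat
  have := Real.pi_pos
  have h2 : (0:ℝ) ≤ 1 / Real.sqrt 2 := by positivity
  have : Real.exp (-π * x ^ 2) ≤ Real.exp (-π * a ^ 2) := by
    apply Real.exp_le_exp.mpr; nlinarith
  nlinarith [Real.exp_pos (-π * x ^ 2)]

lemma wS_nonneg (n : ℤ) : 0 ≤ wS n :=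
  Real.iSup_nonneg fun _ => Real.iSup_nonneg fun _ => abs_nonneg _

lemma le_wS {n : ℤ} {x : ℝ} (hx : x ∈ Set.Icc (n : ℝ) ((n : ℝ) + 1)) :
    gaussHat x ≤ wS n := by
  have habs : gaussHat x = |gaussHat x| := (_root_.abs_of_nonneg (gaussHat_nonneg x)).symm
  rw [habs, wS]
  have hb : BddAbove (Set.range fun y => ⨆ _ : y ∈ Set.Icc (n : ℝ) ((n : ℝ) + 1), |gaussHat y|) := by
    refine ⟨1 / Real.sqrt 2, ?_⟩
    rintro _ ⟨y, rfl⟩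
    exact Real.iSup_le (fun _ => by
      rw [_root_.abs_of_nonneg (gaussHat_nonneg y)]; exact gaussHat_le_half y) (by positivity)
  calc |gaussHat x| = ⨆ _ : x ∈ Set.Icc (n : ℝ) ((n : ℝ) + 1), |gaussHat x| :=
        (ciSup_pos (f := fun _ : x ∈ Set.Icc (n : ℝ) ((n : ℝ) + 1) => |gaussHat x|) hx).symm
    _ ≤ _ := le_ciSup hb x

lemma wS_le (n : ℤ) : wS n ≤ gaussHat n + gaussHat (n + 1) := by
  have h0 : 0 ≤ gaussHat (n:ℝ) + gaussHat ((n:ℝ) + 1) :=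
    add_nonneg (gaussHat_nonneg _) (gaussHat_nonneg _)
  refine Real.iSup_le (fun x => Real.iSup_le (fun hx => ?_) h0) h0
  obtain ⟨h1, h2⟩ := hx
  rw [_root_.abs_of_nonneg (gaussHat_nonneg x)]
  rcases le_or_gt 0 n with hn | hn
  · have hn' : (0:ℝ) ≤ (n:ℝ) := by exact_mod_cast hn
    have : (n:ℝ) ^ 2 ≤ x ^ 2 := by nlinarith
    nlinarith [gaussHat_anti this, gaussHat_nonneg ((n:ℝ)+1)]
  · have hn1 : (n:ℝ) + 1 ≤ 0 := by
      have : n + 1 ≤ 0 := by omega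
      exact_mod_cast this
    have : ((n:ℝ) + 1) ^ 2 ≤ x ^ 2 := by nlinarith
    nlinarith [gaussHat_anti this, gaussHat_nonneg ((n:ℝ))]

lemma summable_gaussHat_int : Summable fun n : ℤ => gaussHat n := by
  have key : Summable fun n : ℤ => Real.exp (-π) ^ n.natAbs := by
    have hr0 : (0:ℝ) ≤ Real.exp (-π) := (Real.exp_pos _).le
    have hr1 : Real.exp (-π) < 1 := by
      rw [Real.exp_lt_one_iff]; linarith [Real.pi_pos]
    have geo := summable_geometric_of_lt_one hr0 hr1
    apply Summable.of_nat_of_neg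
    · simpa using geo
    · simpa using geo
  apply Summable.of_nonneg_of_le (fun n => gaussHat_nonneg _) _ (key.mul_left (1 / Real.sqrt 2))
  intro n
  unfold gaussHat
  have h2 : (0:ℝ) ≤ 1 / Real.sqrt 2 := by positivity
  have h3 : Real.exp (-π * (n:ℝ) ^ 2) ≤ Real.exp (-π) ^ n.natAbs := by
    rw [← Real.exp_nat_mul]
    apply Real.exp_le_exp.mpr
    have h4 : (n.natAbs : ℝ) ≤ (n:ℝ) ^ 2 := by
      have heq : (n.natAbs : ℝ) ^ 2 = (n:ℝ) ^ 2 := by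
        rw [Nat.cast_natAbs]; push_cast; rw [_root_.sq_abs]
      have hk0 : (0:ℝ) ≤ (n.natAbs:ℝ) := Nat.cast_nonneg _
      have hk : (n.natAbs:ℝ) ≤ (n.natAbs:ℝ) ^ 2 := by
        rcases Nat.eq_zero_or_pos n.natAbs with h | h
        · simp [h]
        · have h1 : (1:ℝ) ≤ (n.natAbs:ℝ) := by exact_mod_cast h
          nlinarith
      exact hk.trans_eq heq
    nlinarith [Real.pi_pos]
  exact mul_le_mul_of_nonneg_left h3 h2

lemma summable_wS : Summable wS := by
  have h1 : Summable fun n : ℤ => gaussHat n + gaussHat (n + 1) := by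
    apply Summable.add summable_gaussHat_int
    have h2 := summable_gaussHat_int.comp_injective (add_left_injective (1:ℤ))
    exact h2.congr (by intro n; simp [Function.comp])
  exact Summable.of_nonneg_of_le wS_nonneg (fun n => wS_le n) h1

lemma wienerNorm_gaussHat_eq : wienerNorm gaussHat = ∑' n : ℤ, wS n := rfl

lemma card_fiber_le {μ : ℝ} (hμ : 0 < μ) (ω : ℝ) (F : Finset ℤ) (m : ℤ) :
    ((F.filter fun j : ℤ => ⌊ω - μ * (j:ℝ)⌋ = m).card : ℝ) ≤ 1 / μ + 1 := by
  set a : ℝ := (ω - m - 1) / μ with ha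
  set b : ℝ := (ω - m) / μ with hb
  have hsub : (F.filter fun j : ℤ => ⌊ω - μ * (j:ℝ)⌋ = m) ⊆ Finset.Icc (⌊a⌋ + 1) ⌊b⌋ := by
    intro j hj
    rw [Finset.mem_filter] at hj
    obtain ⟨-, hfl⟩ := hj
    have h1 : (m:ℝ) ≤ ω - μ * j := by rw [← hfl]; exact Int.floor_le _
    have h2 : ω - μ * j < m + 1 := by rw [← hfl]; exact Int.lt_floor_add_one _
    rw [Finset.mem_Icc]
    constructor
    · have haj : a < j := by rw [ha, div_lt_iff₀ hμ]; nlinarith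
      have := Int.floor_lt.mpr haj
      omega
    · exact Int.le_floor.mpr (by rw [hb, le_div_iff₀ hμ]; nlinarith)
  have hcard := Finset.card_le_card hsub
  have hIcc : (Finset.Icc (⌊a⌋ + 1) ⌊b⌋).card = (⌊b⌋ - ⌊a⌋).toNat := by
    rw [Int.card_Icc]; congr 1; omega
  have hba : b - a = 1 / μ := by rw [ha, hb]; field_simp; ring
  rcases le_or_gt (⌊b⌋ - ⌊a⌋) 0 with h | h
  · have : (F.filter fun j : ℤ => ⌊ω - μ * (j:ℝ)⌋ = m).card = 0 := by omega
    rw [this]; norm_num; positivity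
  · have h1 : ((F.filter fun j : ℤ => ⌊ω - μ * (j:ℝ)⌋ = m).card : ℝ) ≤ ((⌊b⌋ - ⌊a⌋).toNat : ℝ) := by
      exact_mod_cast hcard.trans_eq hIcc
    have h2 : ((⌊b⌋ - ⌊a⌋).toNat : ℝ) = (⌊b⌋ : ℝ) - (⌊a⌋ : ℝ) := by
      have : ((⌊b⌋ - ⌊a⌋).toNat : ℤ) = ⌊b⌋ - ⌊a⌋ := by omega
      exact_mod_cast this
    have h3 : (⌊b⌋ : ℝ) ≤ b := Int.floor_le b
    have h4 : a - 1 < (⌊a⌋ : ℝ) := Int.sub_one_lt_floor a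
    calc ((F.filter fun j : ℤ => ⌊ω - μ * (j:ℝ)⌋ = m).card : ℝ) ≤ (⌊b⌋ : ℝ) - (⌊a⌋ : ℝ) := by
          rw [← h2]; exact h1
      _ ≤ b - a + 1 := by linarith
      _ = 1 / μ + 1 := by rw [hba]

lemma sum_translates_le {μ : ℝ} (hμ : 0 < μ) (ω : ℝ) (F : Finset ℤ) :
    ∑ j ∈ F, gaussHat (ω - μ * (j:ℝ)) ≤ (1 / μ + 1) * wienerNorm gaussHat := by
  set n : ℤ → ℤ := fun j => ⌊ω - μ * (j:ℝ)⌋ with hn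
  have hfac : (0:ℝ) ≤ 1 / μ + 1 := by positivity
  calc ∑ j ∈ F, gaussHat (ω - μ * (j:ℝ)) ≤ ∑ j ∈ F, wS (n j) := by
        apply Finset.sum_le_sum
        intro j _
        exact le_wS ⟨Int.floor_le _, (Int.lt_floor_add_one _).le⟩
    _ = ∑ m ∈ F.image n, ∑ j ∈ F.filter (fun j : ℤ => n j = m), wS (n j) :=
        (Finset.sum_fiberwise_of_maps_to (fun x hx => Finset.mem_image_of_mem _ hx) _).symm
    _ = ∑ m ∈ F.image n, ((F.filter fun j : ℤ => n j = m).card : ℝ) * wS m := by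
        apply Finset.sum_congr rfl
        intro m _
        rw [Finset.sum_congr rfl (fun j hj => by
          rw [(Finset.mem_filter.mp hj).2]), Finset.sum_const, nsmul_eq_mul]
    _ ≤ ∑ m ∈ F.image n, (1 / μ + 1) * wS m := by
        apply Finset.sum_le_sum
        intro m _
        exact mul_le_mul_of_nonneg_right (card_fiber_le hμ ω F m) (wS_nonneg m)
    _ = (1 / μ + 1) * ∑ m ∈ F.image n, wS m := (Finset.mul_sum _ _ _).symm
    _ ≤ (1 / μ + 1) * wienerNorm gaussHat := by
        rw [wienerNorm_gaussHat_eq]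
        exact mul_le_mul_of_nonneg_left
          (Summable.sum_le_tsum _ (fun m _ => wS_nonneg m) summable_wS) hfac


/-- the Gaussian window satisfies the two-sided bound
`(1/2) e^{-2πμ²} ≤ Σ_p |Φ_p(ω)|² ≤ ((1/μ + 1) ‖φ̂‖_W)²`. -/
theorem gaussian_two_sided (α : ℝ) (hα : α ∈ Set.Icc (0:ℝ) 1) (μ : ℝ) (hμ : 0 < μ) :
    ∀ ω : ℝ,
      (1 / 2) * Real.exp (-2 * π * μ ^ 2) ≤ ∑' p : ℤ, (ΦR α μ gaussHat p ω) ^ 2 ∧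
        ∑' p : ℤ, (ΦR α μ gaussHat p ω) ^ 2 ≤ ((1 / μ + 1) * wienerNorm gaussHat) ^ 2 := by
  intro ω
  have hα0 : 0 ≤ α := hα.1
  set C : ℝ := (1 / μ + 1) * wienerNorm gaussHat with hC
  have hsumle : ∀ P : Finset ℤ, ∑ p ∈ P, ΦR α μ gaussHat p ω ≤ C := by
    intro P
    have hdisj : (↑P : Set ℤ).PairwiseDisjoint (IpZ α) :=
      fun p _ q _ h => IpZ_disjoint hα0 h
    have heq : ∑ p ∈ P, ΦR α μ gaussHat p ω
        = ∑ j ∈ P.biUnion (IpZ α), gaussHat (ω - μ * (j:ℝ)) := by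
      simp only [ΦR]
      exact (Finset.sum_biUnion hdisj).symm
    rw [heq, hC]
    exact sum_translates_le hμ ω _
  have hΦ0 : ∀ p, 0 ≤ ΦR α μ gaussHat p ω :=
    fun p => Finset.sum_nonneg fun _ _ => gaussHat_nonneg _
  have hsumΦ : Summable (fun p => ΦR α μ gaussHat p ω) :=
    summable_of_sum_le hΦ0 hsumle
  set T : ℝ := ∑' p : ℤ, ΦR α μ gaussHat p ω with hT
  have hT0 : 0 ≤ T := tsum_nonneg hΦ0
  have hTC : T ≤ C := Summable.tsum_le_of_sum_le hsumΦ hsumle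
  have hle : ∀ p : ℤ, (ΦR α μ gaussHat p ω) ^ 2 ≤ ΦR α μ gaussHat p ω * T := by
    intro p
    rw [sq]
    exact mul_le_mul_of_nonneg_left (Summable.le_tsum hsumΦ p fun q _ => hΦ0 q) (hΦ0 p)
  have hsum2 : Summable (fun p : ℤ => (ΦR α μ gaussHat p ω) ^ 2) :=
    Summable.of_nonneg_of_le (fun p => sq_nonneg _) hle (hsumΦ.mul_right T)
  constructor
  · -- lower bound
    set j₀ : ℤ := ⌊ω / μ⌋ with hj₀
    have hf1 : (j₀ : ℝ) ≤ ω / μ := Int.floor_le _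
    have hf2 : ω / μ < (j₀ : ℝ) + 1 := Int.lt_floor_add_one _
    have hx1 : 0 ≤ ω - μ * (j₀ : ℝ) := by
      have := (le_div_iff₀ hμ).mp hf1
      nlinarith
    have hx2 : ω - μ * (j₀ : ℝ) ≤ μ := by
      have := (div_lt_iff₀ hμ).mp hf2
      nlinarith
    obtain ⟨pb, hpb⟩ := exists_mem_IpZ hα0 j₀
    have hxsq : (ω - μ * (j₀ : ℝ)) ^ 2 ≤ μ ^ 2 := by nlinarith
    have hg1 : gaussHat μ ≤ gaussHat (ω - μ * (j₀ : ℝ)) := gaussHat_anti hxsq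
    have hterm : gaussHat (ω - μ * (j₀ : ℝ)) ≤ ΦR α μ gaussHat pb ω := by
      simp only [ΦR]
      exact Finset.single_le_sum (f := fun η : ℤ => gaussHat (ω - μ * (η:ℝ)))
        (fun i _ => gaussHat_nonneg _) hpb
    have hsq : (1 / 2) * Real.exp (-2 * π * μ ^ 2) = gaussHat μ ^ 2 := by
      unfold gaussHat
      rw [mul_pow, div_pow, one_pow, Real.sq_sqrt (by norm_num : (0:ℝ) ≤ 2),
        sq (Real.exp _), ← Real.exp_add]
      ring_nf
    calc (1 / 2) * Real.exp (-2 * π * μ ^ 2) = gaussHat μ ^ 2 := hsq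
      _ ≤ gaussHat (ω - μ * (j₀ : ℝ)) ^ 2 :=
          pow_le_pow_left₀ (gaussHat_nonneg μ) hg1 2
      _ ≤ (ΦR α μ gaussHat pb ω) ^ 2 :=
          pow_le_pow_left₀ (gaussHat_nonneg _) hterm 2
      _ ≤ ∑' p : ℤ, (ΦR α μ gaussHat p ω) ^ 2 :=
          Summable.le_tsum hsum2 pb fun q _ => sq_nonneg _
  · -- upper bound
    calc ∑' p : ℤ, (ΦR α μ gaussHat p ω) ^ 2
        ≤ ∑' p : ℤ, ΦR α μ gaussHat p ω * T :=
          Summable.tsum_le_tsum hle hsum2 (hsumΦ.mul_right T)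
      _ = T * T := by rw [tsum_mul_right]
      _ = T ^ 2 := (sq T).symm
      _ ≤ C ^ 2 := pow_le_pow_left₀ hT0 hTC 2
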